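/- arXiv:2102.13363 — 4 statements merged into one kernel-verified Lean document; each statement's English description precedes it below -/
import Mathlib

section
/- If φ, ψ, χ are mutually independent and each uniformly distributed on [-επ, επ] with 0 < ε ≤ 1, then E[cos(φ - ψ)·cos(χ - φ)] = (1/2)·(1 + sinc(2ε))·sinc(ε)². -/
open MeasureTheory Real

/-- The normalized sinc function `sinc x = sin(πx)/(πx)`, with `sinc 0 = 1`. -/
noncomputable def sinc (x : ℝ) : ℝ := if x = 0 then 1 else Real.sin (π * x) / (π * x)

/-- The uniform probability measure on `[-επ, επ]`. -/
noncomputable def uniformPhase (ε : ℝ) : Measure ℝ :=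
  (ENNReal.ofReal (2 * ε * π))⁻¹ • volume.restrict (Set.Icc (-(ε * π)) (ε * π))

lemma key_integral (ε : ℝ) (hε : 0 < ε) (f : ℝ → ℝ) :
    ∫ x, f x ∂uniformPhase ε = (2 * ε * π)⁻¹ * ∫ x in (-(ε * π))..(ε * π), f x := by
  have h2 : (0:ℝ) < 2 * ε * π := by positivity
  have hle : -(ε * π) ≤ ε * π := by nlinarith [pi_pos]
  rw [uniformPhase, integral_smul_measure, ENNReal.toReal_inv, ENNReal.toReal_ofReal h2.le,
    intervalIntegral.integral_of_le hle, ← MeasureTheory.integral_Icc_eq_integral_Ioc]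
  simp [smul_eq_mul]

lemma integrable_uniformPhase (ε : ℝ) (hε : 0 < ε) (f : ℝ → ℝ) (hf : Continuous f) :
    Integrable f (uniformPhase ε) := by
  have h2 : (0:ℝ) < 2 * ε * π := by positivity
  exact (hf.integrableOn_Icc).smul_measure (by simp [h2])

lemma prob_uniformPhase (ε : ℝ) (hε : 0 < ε) : IsProbabilityMeasure (uniformPhase ε) := by
  constructor
  have h2 : (0:ℝ) < 2 * ε * π := by positivity
  rw [uniformPhase, Measure.smul_apply, Measure.restrict_apply_univ, Real.volume_Icc]
  have : ε * π - -(ε * π) = 2 * ε * π := by ring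
  rw [this, smul_eq_mul, ENNReal.inv_mul_cancel (by simp [h2]) (by simp)]

lemma int_cos (ε : ℝ) (hε : 0 < ε) : ∫ x, Real.cos x ∂uniformPhase ε = _root_.sinc ε := by
  rw [key_integral ε hε, integral_cos, _root_.sinc, if_neg hε.ne']
  rw [Real.sin_neg]
  have h2 : (0:ℝ) < 2 * ε * π := by positivity
  have hp : (0:ℝ) < π * ε := by positivity
  rw [show π * ε = ε * π by ring]
  field_simp
  ring

lemma int_sin (ε : ℝ) (hε : 0 < ε) : ∫ x, Real.sin x ∂uniformPhase ε = 0 := by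
  rw [key_integral ε hε, integral_sin, Real.cos_neg]
  ring

lemma int_cos_sq (ε : ℝ) (hε : 0 < ε) :
    ∫ x, Real.cos x ^ 2 ∂uniformPhase ε = (1 + _root_.sinc (2 * ε)) / 2 := by
  rw [key_integral ε hε, integral_cos_sq, _root_.sinc, if_neg (by positivity : (0:ℝ) < 2 * ε).ne']
  have h2 : (0:ℝ) < 2 * ε * π := by positivity
  rw [show π * (2 * ε) = 2 * (ε * π) by ring, Real.sin_two_mul, Real.cos_neg, Real.sin_neg]
  field_simp
  ring

/-- If `φ, ψ, χ` are i.i.d. `Uniform(-επ, επ)` with `0 < ε ≤ 1`, then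
`E[cos(φ - ψ)·cos(χ - φ)] = (1/2)·(1 + _root_.sinc(2ε))·_root_.sinc(ε)²`. -/
theorem expectation_cos_diff_mul_cos_diff_uniform (ε : ℝ) (hε : 0 < ε) (hε1 : ε ≤ 1) :
    (∫ p : ℝ × ℝ × ℝ, Real.cos (p.1 - p.2.1) * Real.cos (p.2.2 - p.1)
        ∂((uniformPhase ε).prod ((uniformPhase ε).prod (uniformPhase ε)))) =
      1 / 2 * (1 + _root_.sinc (2 * ε)) * _root_.sinc ε ^ 2 := by
  set μ := uniformPhase ε with hμ
  haveI : IsProbabilityMeasure μ := prob_uniformPhase ε hε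
  have hc : Continuous fun p : ℝ × ℝ × ℝ => Real.cos (p.1 - p.2.1) * Real.cos (p.2.2 - p.1) := by
    fun_prop
  have hint : Integrable (fun p : ℝ × ℝ × ℝ => Real.cos (p.1 - p.2.1) * Real.cos (p.2.2 - p.1))
      (μ.prod (μ.prod μ)) := by
    refine Integrable.mono' (integrable_const 1) hc.aestronglyMeasurable ?_
    filter_upwards with p
    rw [Real.norm_eq_abs, abs_mul]
    exact mul_le_one₀ (Real.abs_cos_le_one _) (abs_nonneg _) (Real.abs_cos_le_one _)
  rw [MeasureTheory.integral_prod _ hint]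
  have h1 : ∀ x : ℝ, ∫ ψ, Real.cos (x - ψ) ∂μ = Real.cos x * _root_.sinc ε := by
    intro x
    simp_rw [Real.cos_sub]
    rw [integral_add ((integrable_uniformPhase ε hε _ continuous_cos).const_mul _)
        ((integrable_uniformPhase ε hε _ continuous_sin).const_mul _),
      integral_const_mul, integral_const_mul, int_cos ε hε, int_sin ε hε]
    ring
  have h2 : ∀ x : ℝ, ∫ χ, Real.cos (χ - x) ∂μ = Real.cos x * _root_.sinc ε := by
    intro x
    simp_rw [Real.cos_sub]
    rw [integral_add ((integrable_uniformPhase ε hε _ continuous_cos).mul_const _)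
        ((integrable_uniformPhase ε hε _ continuous_sin).mul_const _),
      integral_mul_const, integral_mul_const, int_cos ε hε, int_sin ε hε]
    ring
  have step : ∀ x : ℝ, (∫ y : ℝ × ℝ, Real.cos (x - y.1) * Real.cos (y.2 - x) ∂(μ.prod μ))
      = _root_.sinc ε ^ 2 * Real.cos x ^ 2 := by
    intro x
    rw [MeasureTheory.integral_prod_mul (f := fun ψ => Real.cos (x - ψ))
        (g := fun χ => Real.cos (χ - x)), h1 x, h2 x]
    ring
  simp_rw [step]
  rw [integral_const_mul, int_cos_sq ε hε]
  ring
end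

section
/- If γ is Gamma distributed with shape α > 0 and rate β > 0, then E[log₂(1+γ)] = (β^α / (Γ(α) ln 2)) · ∑_{k=1}^∞ (Γ(k+α)/k) · U(k+α, 1+α, β), where U is the confluent hypergeometric function of the second kind defined by U(a,b,z) = (1/Γ(a)) ∫₀^∞ (1+u)^{b-a-1} u^{a-1} e^{-zu} du. -/
open MeasureTheory Real

/-- The Gamma(α, β) density `f(u) = β^α u^{α-1} e^{-βu} / Γ(α)` on `(0,∞)`. -/
noncomputable def gammaPDF (α β u : ℝ) : ℝ :=
  β ^ α * u ^ (α - 1) * Real.exp (-β * u) / Real.Gamma α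

/-- Tricomi's confluent hypergeometric function `U(a,b,z)` via its integral
representation: `U(a,b,z) = (1/Γ(a)) ∫₀^∞ (1+u)^{b-a-1} u^{a-1} e^{-zu} du`. -/
noncomputable def kummerU (a b z : ℝ) : ℝ :=
  (1 / Real.Gamma a) * ∫ u in Set.Ioi (0 : ℝ),
    (1 + u) ^ (b - a - 1) * u ^ (a - 1) * Real.exp (-z * u)


lemma key_hasSum (α β : ℝ) {u : ℝ} (hu : 0 < u) :
    HasSum (fun k : ℕ => (1+u) ^ (-((k:ℝ)+1)) * u ^ ((k:ℝ)+α) * Real.exp (-β*u) / ((k:ℝ)+1))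
      (Real.log (1+u) * (u ^ (α-1) * Real.exp (-β*u))) := by
  have h1u : (0:ℝ) < 1 + u := by linarith
  have hx : |u/(1+u)| < 1 := by
    rw [abs_of_nonneg (by positivity), div_lt_one h1u]; linarith
  have H := (Real.hasSum_pow_div_log_of_abs_lt_one hx).mul_right (u ^ (α-1) * Real.exp (-β*u))
  have h1 : 1 - u/(1+u) = 1/(1+u) := by field_simp; ring
  rw [h1, one_div, Real.log_inv, neg_neg] at H
  have hfun : (fun k : ℕ => (u/(1+u)) ^ (k+1) / ((k:ℝ)+1) * (u ^ (α-1) * Real.exp (-β*u)))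
      = fun k : ℕ => (1+u) ^ (-((k:ℝ)+1)) * u ^ ((k:ℝ)+α) * Real.exp (-β*u) / ((k:ℝ)+1) := by
    funext k
    have hk1 : ((k:ℝ)+1) ≠ 0 := by positivity
    have e1 : u ^ ((k:ℝ)+α) = u ^ (k+1 : ℕ) * u ^ (α-1) := by
      rw [show (k:ℝ)+α = ((k+1:ℕ):ℝ) + (α-1) by push_cast; ring, Real.rpow_add hu,
        Real.rpow_natCast]
    have e2 : (1+u) ^ (-((k:ℝ)+1)) = ((1+u) ^ (k+1 : ℕ))⁻¹ := by
      rw [show -((k:ℝ)+1) = -(((k+1:ℕ):ℝ)) by push_cast; ring, Real.rpow_neg h1u.le,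
        Real.rpow_natCast]
    rw [e1, e2, div_pow]
    have hne : (1+u) ^ (k+1 : ℕ) ≠ 0 := by positivity
    field_simp
  rw [hfun] at H
  exact H


lemma core_eq (α β : ℝ) (hα : 0 < α) (hβ : 0 < β) :
    (∫ u in Set.Ioi (0:ℝ), Real.log (1+u) * (u ^ (α-1) * Real.exp (-β*u)))
      = ∑' k : ℕ, (∫ u in Set.Ioi (0:ℝ),
          (1+u) ^ (-((k:ℝ)+1)) * u ^ ((k:ℝ)+α) * Real.exp (-β*u)) / ((k:ℝ)+1) := by
  set μ := volume.restrict (Set.Ioi (0:ℝ)) with hμ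
  set F : ℝ → ℝ := fun u => Real.log (1+u) * (u ^ (α-1) * Real.exp (-β*u)) with hF
  set φ : ℕ → ℝ → ℝ :=
    fun k u => (1+u) ^ (-((k:ℝ)+1)) * u ^ ((k:ℝ)+α) * Real.exp (-β*u) / ((k:ℝ)+1) with hφ
  have mφ : ∀ k : ℕ, Measurable (φ k) := by
    intro k
    apply Measurable.div_const
    exact (((measurable_const.add measurable_id').pow_const _).mul
      (measurable_id'.pow_const _)).mul (measurable_id'.const_mul (-β)).exp
  have mF : Measurable F := by
    exact ((Real.measurable_log.comp (measurable_const.add measurable_id')).mul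
      ((measurable_id'.pow_const _).mul (measurable_id'.const_mul (-β)).exp))
  have hφ0 : ∀ k : ℕ, ∀ u : ℝ, 0 ≤ u → 0 ≤ φ k u := by
    intro k u hu
    apply div_nonneg _ (by positivity)
    apply mul_nonneg (mul_nonneg _ _) (Real.exp_nonneg _)
    · exact Real.rpow_nonneg (by linarith) _
    · exact Real.rpow_nonneg hu _
  -- pointwise sum in ENNReal
  have hpt : ∀ u : ℝ, u ∈ Set.Ioi (0:ℝ) →
      (∑' k : ℕ, ENNReal.ofReal (φ k u)) = ENNReal.ofReal (F u) := by
    intro u hu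
    rw [← ENNReal.ofReal_tsum_of_nonneg (fun k => hφ0 k u (le_of_lt hu))
      (key_hasSum α β hu).summable, (key_hasSum α β hu).tsum_eq]
  -- finiteness
  have hGint : IntegrableOn (fun u : ℝ => u ^ α * Real.exp (-β*u)) (Set.Ioi 0) := by
    have h := integrableOn_rpow_mul_exp_neg_mul_rpow (show (-1:ℝ) < α by linarith)
      (zero_lt_one : (0:ℝ) < 1) hβ
    simpa only [Real.rpow_one] using h
  have hfin : (∫⁻ u, ENNReal.ofReal (F u) ∂μ) < ⊤ := by
    have hle : (∫⁻ u, ENNReal.ofReal (F u) ∂μ)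
        ≤ ∫⁻ u, ENNReal.ofReal (u ^ α * Real.exp (-β*u)) ∂μ := by
      refine lintegral_mono_ae ?_
      filter_upwards [ae_restrict_mem measurableSet_Ioi] with u hu
      apply ENNReal.ofReal_le_ofReal
      have hu : (0:ℝ) < u := hu
      have hlog : Real.log (1+u) ≤ u := by
        have := Real.log_le_sub_one_of_pos (show (0:ℝ) < 1+u by linarith)
        linarith
      have he : u * u ^ (α-1) = u ^ α := by
        rw [show α = 1+(α-1) by ring, Real.rpow_add hu, Real.rpow_one]; ring_nf
      calc F u ≤ u * (u ^ (α-1) * Real.exp (-β*u)) := by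
            apply mul_le_mul_of_nonneg_right hlog
            exact mul_nonneg (Real.rpow_nonneg hu.le _) (Real.exp_nonneg _)
        _ = u ^ α * Real.exp (-β*u) := by rw [← mul_assoc, he]
    exact lt_of_le_of_lt hle hGint.lintegral_lt_top
  have hLsum : (∑' k : ℕ, ∫⁻ u, ENNReal.ofReal (φ k u) ∂μ)
      = ∫⁻ u, ENNReal.ofReal (F u) ∂μ := by
    rw [← lintegral_tsum (f := fun k u => ENNReal.ofReal (φ k u))
      (fun k => ((mφ k).ennreal_ofReal).aemeasurable)]
    refine lintegral_congr_ae ?_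
    filter_upwards [ae_restrict_mem measurableSet_Ioi] with u hu
    exact hpt u hu
  have hsne : (∑' k : ℕ, ∫⁻ u, ENNReal.ofReal (φ k u) ∂μ) ≠ ⊤ := by
    rw [hLsum]; exact hfin.ne
  have hLne : ∀ k : ℕ, (∫⁻ u, ENNReal.ofReal (φ k u) ∂μ) ≠ ⊤ := fun k =>
    ne_top_of_le_ne_top hsne (ENNReal.le_tsum k)
  have hF0 : 0 ≤ᵐ[μ] F := by
    filter_upwards [ae_restrict_mem measurableSet_Ioi] with u hu
    have hu : (0:ℝ) < u := hu
    apply mul_nonneg (Real.log_nonneg (by linarith))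
    exact mul_nonneg (Real.rpow_nonneg hu.le _) (Real.exp_nonneg _)
  have hφ0' : ∀ k : ℕ, 0 ≤ᵐ[μ] φ k := by
    intro k
    filter_upwards [ae_restrict_mem measurableSet_Ioi] with u hu
    exact hφ0 k u (le_of_lt hu)
  have hterm : ∀ k : ℕ, (∫ u in Set.Ioi (0:ℝ),
      (1+u) ^ (-((k:ℝ)+1)) * u ^ ((k:ℝ)+α) * Real.exp (-β*u)) / ((k:ℝ)+1)
      = (∫⁻ u, ENNReal.ofReal (φ k u) ∂μ).toReal := by
    intro k
    rw [← integral_div]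
    exact integral_eq_lintegral_of_nonneg_ae (hφ0' k) (mφ k).aestronglyMeasurable
  calc (∫ u in Set.Ioi (0:ℝ), F u)
      = (∫⁻ u, ENNReal.ofReal (F u) ∂μ).toReal :=
        integral_eq_lintegral_of_nonneg_ae hF0 mF.aestronglyMeasurable
    _ = (∑' k : ℕ, ∫⁻ u, ENNReal.ofReal (φ k u) ∂μ).toReal := by rw [hLsum]
    _ = ∑' k : ℕ, (∫⁻ u, ENNReal.ofReal (φ k u) ∂μ).toReal := ENNReal.tsum_toReal_eq hLne
    _ = ∑' k : ℕ, (∫ u in Set.Ioi (0:ℝ),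
          (1+u) ^ (-((k:ℝ)+1)) * u ^ ((k:ℝ)+α) * Real.exp (-β*u)) / ((k:ℝ)+1) := by
        exact tsum_congr fun k => (hterm k).symm

/-- If `γ ~ Γ(α, β)` with `α, β > 0`, then
`E[log₂(1+γ)] = (β^α / (Γ(α) ln 2)) · ∑_{k=1}^∞ (Γ(k+α)/k) · U(k+α, 1+α, β)`. -/
theorem expectation_log_one_add_gamma (α β : ℝ) (hα : 0 < α) (hβ : 0 < β) :
    (∫ u in Set.Ioi (0 : ℝ), Real.logb 2 (1 + u) * gammaPDF α β u) =
      β ^ α / (Real.Gamma α * Real.log 2) *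
        ∑' k : ℕ, Real.Gamma ((k + 1 : ℝ) + α) / (k + 1) *
          kummerU ((k + 1 : ℝ) + α) (1 + α) β := by
  have hΓ : Real.Gamma α ≠ 0 := (Real.Gamma_pos_of_pos hα).ne'
  have hl2 : Real.log 2 ≠ 0 := (Real.log_pos (by norm_num)).ne'
  have hL : ∀ u : ℝ, Real.logb 2 (1+u) * gammaPDF α β u
      = β ^ α / (Real.Gamma α * Real.log 2)
        * (Real.log (1+u) * (u ^ (α-1) * Real.exp (-β*u))) := by
    intro u
    unfold gammaPDF Real.logb
    field_simp
  have hR : ∀ k : ℕ, Real.Gamma ((k + 1 : ℝ) + α) / ((k:ℝ) + 1)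
        * kummerU ((k + 1 : ℝ) + α) (1 + α) β
      = (∫ u in Set.Ioi (0:ℝ),
          (1+u) ^ (-((k:ℝ)+1)) * u ^ ((k:ℝ)+α) * Real.exp (-β*u)) / ((k:ℝ)+1) := by
    intro k
    have ha : (0:ℝ) < (k + 1 : ℝ) + α := by positivity
    have hΓa : Real.Gamma ((k + 1 : ℝ) + α) ≠ 0 := (Real.Gamma_pos_of_pos ha).ne'
    unfold kummerU
    rw [show (1 + α - ((k + 1 : ℝ) + α) - 1) = -((k:ℝ)+1) by ring,
      show ((k + 1 : ℝ) + α - 1) = (k:ℝ) + α by ring]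
    field_simp
    ring
    congr 1
    funext u
    ring
  simp_rw [hL, hR]
  rw [integral_const_mul, core_eq α β hα hβ]
end

section
/- If γ is Gamma distributed with shape α > 0 and rate β > 0, then ∫₀^∞ (1 - 1/(2(1+u)²)) f_γ(u) du = (1/2)·(2 - β + e^β · β · (α + β - 1) · E_α(β)), where E_α(z) = ∫₁^∞ e^{-zt} t^{-α} dt is the generalized exponential integral. -/
open MeasureTheory Real

/-- The generalized exponential integral `E_α(z) = ∫₁^∞ e^{-zt} t^{-α} dt`. -/
noncomputable def expInt (α z : ℝ) : ℝ :=
  ∫ t in Set.Ioi (1 : ℝ), Real.exp (-z * t) * t ^ (-α)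

section Helpers
open Set Filter

lemma intOn_rpow_exp {s c : ℝ} (hs : -1 < s) (hc : 0 < c) :
    MeasureTheory.IntegrableOn (fun x : ℝ => x ^ s * Real.exp (-(c * x))) (Set.Ioi 0) := by
  have := integrableOn_rpow_mul_exp_neg_mul_rpow (p := 1) hs one_pos hc
  simpa [Real.rpow_one, neg_mul] using this

lemma inner_s {c : ℝ} (hc : 0 < c) :
    ∫ s in Set.Ioi (0:ℝ), s * Real.exp (-(c * s)) = (c ^ 2)⁻¹ := by
  have h := integral_rpow_mul_exp_neg_mul_Ioi (by norm_num : (0:ℝ) < 2) hc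
  rw [show (2:ℝ) - 1 = 1 by norm_num] at h
  simp only [Real.rpow_one] at h
  rw [h, Real.Gamma_two, mul_one, show ((2:ℝ)) = ((2:ℕ):ℝ) by norm_num,
    Real.rpow_natCast, one_div, inv_pow]

lemma inner_u {α c : ℝ} (hα : 0 < α) (hc : 0 < c) :
    ∫ u in Set.Ioi (0:ℝ), u ^ (α - 1) * Real.exp (-(c * u)) = c ^ (-α) * Real.Gamma α := by
  rw [integral_rpow_mul_exp_neg_mul_Ioi hα hc, one_div, Real.inv_rpow hc.le,
    ← Real.rpow_neg hc.le]

lemma fubini_step {α β : ℝ} (hα : 0 < α) (hβ : 0 < β) :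
    ∫ u in Set.Ioi (0:ℝ), u ^ (α - 1) * Real.exp (-(β * u)) * ((1 + u) ^ 2)⁻¹
      = Real.Gamma α * ∫ s in Set.Ioi (0:ℝ), s * Real.exp (-s) * (β + s) ^ (-α) := by
  set μ := volume.restrict (Set.Ioi (0:ℝ)) with hμ
  set P : ℝ → ℝ → ℝ := fun u s =>
    (u ^ (α - 1) * Real.exp (-(β * u))) * (s * Real.exp (-((1 + u) * s))) with hP
  have mP : Measurable (Function.uncurry P) := by
    apply Measurable.mul
    · exact (measurable_fst.pow measurable_const).mul ((measurable_fst.const_mul β).neg.exp)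
    · exact measurable_snd.mul (((measurable_const.add measurable_fst).mul measurable_snd).neg.exp)
  have hg : MeasureTheory.IntegrableOn
      (fun u : ℝ => u ^ (α - 1) * Real.exp (-(β * u))) (Set.Ioi 0) :=
    intOn_rpow_exp (by linarith) hβ
  have hval : ∀ u : ℝ, 0 < u → (∫ s, P u s ∂μ)
      = u ^ (α - 1) * Real.exp (-(β * u)) * ((1 + u) ^ 2)⁻¹ := by
    intro u hu
    have h1u : (0:ℝ) < 1 + u := by linarith
    rw [hμ, hP, MeasureTheory.integral_const_mul, inner_s h1u]
  have hnorm : ∀ u : ℝ, 0 < u → (∫ s, ‖P u s‖ ∂μ) = ∫ s, P u s ∂μ := by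
    intro u hu
    rw [hμ]
    refine MeasureTheory.setIntegral_congr_fun measurableSet_Ioi (fun s hs => ?_)
    have hs0 : (0:ℝ) < s := hs
    rw [Real.norm_eq_abs, abs_of_nonneg]
    rw [hP]
    have : (0:ℝ) ≤ u ^ (α - 1) := Real.rpow_nonneg hu.le _
    positivity
  have hPint : MeasureTheory.Integrable (Function.uncurry P) (μ.prod μ) := by
    rw [MeasureTheory.integrable_prod_iff mP.aestronglyMeasurable]
    constructor
    · filter_upwards [MeasureTheory.ae_restrict_mem measurableSet_Ioi] with u hu
      have h1u : (0:ℝ) < 1 + u := by have : (0:ℝ) < u := hu; linarith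
      have := (intOn_rpow_exp (by norm_num : (-1:ℝ) < 1) h1u).const_mul
        (u ^ (α - 1) * Real.exp (-(β * u)))
      simp only [Real.rpow_one] at this
      exact this
    · apply MeasureTheory.Integrable.mono' hg
      · exact (mP.norm.aestronglyMeasurable).integral_prod_right'
      · filter_upwards [MeasureTheory.ae_restrict_mem measurableSet_Ioi] with u hu
        have hu0 : (0:ℝ) < u := hu
        have h1u : (0:ℝ) < 1 + u := by linarith
        simp only [Function.uncurry_apply_pair]
        rw [hnorm u hu0, hval u hu0]
        have hinv : ((1 + u) ^ 2)⁻¹ ≤ 1 := by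
          rw [inv_le_one_iff₀]; right; nlinarith
        have hnn : (0:ℝ) ≤ u ^ (α - 1) * Real.exp (-(β * u)) := by
          have : (0:ℝ) ≤ u ^ (α - 1) := Real.rpow_nonneg hu0.le _
          positivity
        rw [Real.norm_eq_abs, abs_of_nonneg]
        · nlinarith
        · positivity
  have step1 : (∫ u in Set.Ioi (0:ℝ), u ^ (α - 1) * Real.exp (-(β * u)) * ((1 + u) ^ 2)⁻¹)
      = ∫ u, (∫ s, P u s ∂μ) ∂μ := by
    rw [hμ]
    refine MeasureTheory.setIntegral_congr_fun measurableSet_Ioi (fun u hu => ?_)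
    exact (hval u hu).symm
  have step2 : (∫ u, (∫ s, P u s ∂μ) ∂μ) = ∫ s, (∫ u, P u s ∂μ) ∂μ :=
    MeasureTheory.integral_integral_swap hPint
  have step3 : (∫ s, (∫ u, P u s ∂μ) ∂μ)
      = ∫ s in Set.Ioi (0:ℝ), Real.Gamma α * (s * Real.exp (-s) * (β + s) ^ (-α)) := by
    rw [hμ]
    refine MeasureTheory.setIntegral_congr_fun measurableSet_Ioi (fun s hs => ?_)
    have hs0 : (0:ℝ) < s := hs
    have hbs : (0:ℝ) < β + s := by linarith
    have hre : ∀ u : ℝ, P u s = (s * Real.exp (-s)) * (u ^ (α - 1) * Real.exp (-((β + s) * u))) := by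
      intro u
      rw [hP]
      have hexp : Real.exp (-(β * u)) * Real.exp (-((1 + u) * s))
          = Real.exp (-s) * Real.exp (-((β + s) * u)) := by
        rw [← Real.exp_add, ← Real.exp_add]; congr 1; ring
      calc u ^ (α - 1) * Real.exp (-(β * u)) * (s * Real.exp (-((1 + u) * s)))
          = u ^ (α - 1) * s * (Real.exp (-(β * u)) * Real.exp (-((1 + u) * s))) := by ring
        _ = u ^ (α - 1) * s * (Real.exp (-s) * Real.exp (-((β + s) * u))) := by rw [hexp]
        _ = _ := by ring
    simp only [hre]
    rw [MeasureTheory.integral_const_mul, inner_u hα hbs]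
    ring
  rw [step1, step2, step3, MeasureTheory.integral_const_mul]


lemma subst_step {α β : ℝ} (hα : 0 < α) (hβ : 0 < β) :
    ∫ s in Set.Ioi (0:ℝ), s * Real.exp (-s) * (β + s) ^ (-α)
      = β ^ (2 - α) * ∫ v in Set.Ioi (0:ℝ), v * Real.exp (-(β * v)) * (1 + v) ^ (-α) := by
  have h := MeasureTheory.integral_comp_mul_left_Ioi
    (fun s => s * Real.exp (-s) * (β + s) ^ (-α)) 0 hβ
  rw [mul_zero] at h
  simp only [smul_eq_mul] at h
  have h2 : (∫ s in Set.Ioi (0:ℝ), s * Real.exp (-s) * (β + s) ^ (-α))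
      = β * ∫ x in Set.Ioi (0:ℝ), β * x * Real.exp (-(β * x)) * (β + β * x) ^ (-α) := by
    rw [h]; field_simp
  have hpow : β ^ (2 - α) = β * β ^ (1 - α) := by
    rw [show (2:ℝ) - α = 1 + (1 - α) by ring, Real.rpow_add hβ, Real.rpow_one]
  have h3 : (∫ x in Set.Ioi (0:ℝ), β * x * Real.exp (-(β * x)) * (β + β * x) ^ (-α))
      = ∫ v in Set.Ioi (0:ℝ),
          β ^ (1 - α) * (v * Real.exp (-(β * v)) * (1 + v) ^ (-α)) := by
    refine MeasureTheory.setIntegral_congr_fun measurableSet_Ioi (fun v hv => ?_)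
    have hv0 : (0:ℝ) < v := hv
    have h1 : (0:ℝ) < 1 + v := by linarith
    have hfac : (β + β * v) ^ (-α) = β ^ (-α) * (1 + v) ^ (-α) := by
      rw [show β + β * v = β * (1 + v) by ring, Real.mul_rpow hβ.le h1.le]
    have hb1 : β ^ (1 - α) = β * β ^ (-α) := by
      rw [show (1:ℝ) - α = 1 + -α by ring, Real.rpow_add hβ, Real.rpow_one]
    rw [hfac, hb1]
    ring
  rw [h2, h3, MeasureTheory.integral_const_mul, hpow]
  ring

lemma int_h {α β : ℝ} (hα : 0 < α) (hβ : 0 < β) :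
    MeasureTheory.IntegrableOn (fun v : ℝ => Real.exp (-(β * v)) * (1 + v) ^ (-α))
      (Set.Ioi 0) := by
  apply MeasureTheory.Integrable.mono' (g := fun v : ℝ => Real.exp (-β * v))
      (exp_neg_integrableOn_Ioi 0 hβ)
  · exact (((measurable_id.const_mul β).neg.exp).mul
      ((measurable_const.add measurable_id).pow measurable_const)).aestronglyMeasurable
  · filter_upwards [ae_restrict_mem measurableSet_Ioi] with v hv
    have hv0 : (0:ℝ) < v := hv
    have h1 : (0:ℝ) < 1 + v := by linarith
    have h2 : (1 + v) ^ (-α) ≤ 1 :=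
      Real.rpow_le_one_of_one_le_of_nonpos (by linarith) (by linarith)
    have h3 : (0:ℝ) ≤ (1 + v) ^ (-α) := Real.rpow_nonneg h1.le _
    rw [Real.norm_eq_abs, abs_of_nonneg (by positivity), neg_mul]
    nlinarith [Real.exp_pos (-(β * v))]

lemma int_vh {α β : ℝ} (hα : 0 < α) (hβ : 0 < β) :
    MeasureTheory.IntegrableOn (fun v : ℝ => v * Real.exp (-(β * v)) * (1 + v) ^ (-α))
      (Set.Ioi 0) := by
  have hint := intOn_rpow_exp (s := 1) (by norm_num) hβ
  simp only [Real.rpow_one] at hint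
  apply MeasureTheory.Integrable.mono' hint
  · exact ((measurable_id.mul ((measurable_id.const_mul β).neg.exp)).mul
      ((measurable_const.add measurable_id).pow measurable_const)).aestronglyMeasurable
  · filter_upwards [ae_restrict_mem measurableSet_Ioi] with v hv
    have hv0 : (0:ℝ) < v := hv
    have h1 : (0:ℝ) < 1 + v := by linarith
    have h2 : (1 + v) ^ (-α) ≤ 1 :=
      Real.rpow_le_one_of_one_le_of_nonpos (by linarith) (by linarith)
    have h3 : (0:ℝ) ≤ (1 + v) ^ (-α) := Real.rpow_nonneg h1.le _
    rw [Real.norm_eq_abs, abs_of_nonneg (by positivity)]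
    nlinarith [Real.exp_pos (-(β * v)), mul_pos hv0 (Real.exp_pos (-(β * v)))]

lemma ftc_step {α β : ℝ} (hα : 0 < α) (hβ : 0 < β) :
    β * (∫ v in Set.Ioi (0:ℝ), v * Real.exp (-(β * v)) * (1 + v) ^ (-α))
      + (α + β - 1) * (∫ v in Set.Ioi (0:ℝ), Real.exp (-(β * v)) * (1 + v) ^ (-α)) = 1 := by
  have int_h := int_h hα hβ
  have int_vh := int_vh hα hβ
  have hderiv : ∀ x ∈ Set.Ici (0:ℝ),
      HasDerivAt (fun v : ℝ => -(Real.exp (-(β * v)) * (1 + v) ^ (1 - α)))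
        (β * (x * Real.exp (-(β * x)) * (1 + x) ^ (-α))
          + (α + β - 1 - β) * (Real.exp (-(β * x)) * (1 + x) ^ (-α))
          + β * (Real.exp (-(β * x)) * (1 + x) ^ (-α))) x := by
    intro x hx
    have hx0 : (0:ℝ) ≤ x := hx
    have h1x : (0:ℝ) < 1 + x := by linarith
    have d1 : HasDerivAt (fun v : ℝ => -(β * v)) (-β) x := by
      exact (((hasDerivAt_id x).const_mul β).neg).congr_deriv (by simp)
    have d2 : HasDerivAt (fun v : ℝ => Real.exp (-(β * v)))
        (Real.exp (-(β * x)) * -β) x := d1.exp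
    have dbase : HasDerivAt (fun v : ℝ => 1 + v) 1 x := (hasDerivAt_id x).const_add 1
    have d3 : HasDerivAt (fun v : ℝ => (1 + v) ^ (1 - α))
        ((1 - α) * (1 + x) ^ (1 - α - 1) * 1) x :=
      (Real.hasDerivAt_rpow_const (Or.inl h1x.ne')).comp x dbase
    have d4 : HasDerivAt (fun v : ℝ => -(Real.exp (-(β * v)) * (1 + v) ^ (1 - α)))
        (-(Real.exp (-(β * x)) * -β * (1 + x) ^ (1 - α) + Real.exp (-(β * x)) * ((1 - α) * (1 + x) ^ (1 - α - 1) * 1))) x :=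
      (d2.mul d3).neg
    convert d4 using 1
    have e1 : (1 + x) ^ (1 - α) = (1 + x) * (1 + x) ^ (-α) := by
      rw [show (1:ℝ) - α = 1 + -α by ring, Real.rpow_add h1x, Real.rpow_one]
    have e2 : (1 + x) ^ (1 - α - 1) = (1 + x) ^ (-α) := by
      rw [show (1:ℝ) - α - 1 = -α by ring]
    rw [e1, e2]
    ring
  have htend : Filter.Tendsto (fun v : ℝ => -(Real.exp (-(β * v)) * (1 + v) ^ (1 - α)))
      Filter.atTop (nhds 0) := by
    have hb := tendsto_rpow_mul_exp_neg_mul_atTop_nhds_zero (1 - α) β hβ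
    have hcomp : Filter.Tendsto (fun v : ℝ => 1 + v) Filter.atTop Filter.atTop :=
      Filter.tendsto_atTop_add_const_left _ 1 Filter.tendsto_id
    have h2 := (hb.comp hcomp).const_mul (-Real.exp β)
    rw [mul_zero] at h2
    refine h2.congr (fun v => ?_)
    show -Real.exp β * ((1 + v) ^ (1 - α) * Real.exp (-β * (1 + v))) = _
    have : Real.exp β * Real.exp (-β * (1 + v)) = Real.exp (-(β * v)) := by
      rw [← Real.exp_add]; ring_nf
    rw [← this]
    ring
  have hf'int : MeasureTheory.IntegrableOn (fun x : ℝ =>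
      β * (x * Real.exp (-(β * x)) * (1 + x) ^ (-α))
        + (α + β - 1 - β) * (Real.exp (-(β * x)) * (1 + x) ^ (-α))
        + β * (Real.exp (-(β * x)) * (1 + x) ^ (-α))) (Set.Ioi 0) :=
    ((int_vh.const_mul β).add (int_h.const_mul (α + β - 1 - β))).add (int_h.const_mul β)
  have key := MeasureTheory.integral_Ioi_of_hasDerivAt_of_tendsto' hderiv hf'int htend
  simp only [Real.one_rpow, mul_zero, neg_zero, add_zero, Real.exp_zero, one_mul,
    mul_one, zero_sub, neg_neg] at key
  have hA : MeasureTheory.IntegrableOn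
      (fun x : ℝ => β * (x * Real.exp (-(β * x)) * (1 + x) ^ (-α))) (Set.Ioi 0) :=
    int_vh.const_mul β
  have hB : MeasureTheory.IntegrableOn
      (fun x : ℝ => (α + β - 1 - β) * (Real.exp (-(β * x)) * (1 + x) ^ (-α))) (Set.Ioi 0) :=
    int_h.const_mul _
  have hC : MeasureTheory.IntegrableOn
      (fun x : ℝ => β * (Real.exp (-(β * x)) * (1 + x) ^ (-α))) (Set.Ioi 0) :=
    int_h.const_mul _
  have hAB : MeasureTheory.IntegrableOn
      (fun x : ℝ => β * (x * Real.exp (-(β * x)) * (1 + x) ^ (-α))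
        + (α + β - 1 - β) * (Real.exp (-(β * x)) * (1 + x) ^ (-α))) (Set.Ioi 0) := hA.add hB
  rw [MeasureTheory.integral_add hAB hC, MeasureTheory.integral_add hA hB,
    MeasureTheory.integral_const_mul, MeasureTheory.integral_const_mul,
    MeasureTheory.integral_const_mul] at key
  linarith


lemma expInt_eq (α β : ℝ) :
    expInt α β
      = Real.exp (-β) * ∫ v in Set.Ioi (0:ℝ), Real.exp (-(β * v)) * (1 + v) ^ (-α) := by
  unfold expInt
  have hemb : MeasurableEmbedding (fun x : ℝ => x + 1) :=
    (Homeomorph.addRight (1:ℝ)).isClosedEmbedding.measurableEmbedding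
  have hmp : MeasurePreserving (fun x : ℝ => x + 1) volume volume :=
    measurePreserving_add_right volume 1
  have h := hmp.setIntegral_preimage_emb hemb
    (fun t => Real.exp (-β * t) * t ^ (-α)) (Set.Ioi 1)
  have hpre : (fun x : ℝ => x + 1) ⁻¹' Set.Ioi 1 = Set.Ioi 0 := by
    ext x; simp
  rw [hpre] at h
  rw [← h, ← MeasureTheory.integral_const_mul]
  refine setIntegral_congr_fun measurableSet_Ioi (fun v hv => ?_)
  have : -β * (v + 1) = -β + -(β * v) := by ring
  rw [this, Real.exp_add, add_comm v 1]
  ring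

lemma pdf_integral {α β : ℝ} (hα : 0 < α) (hβ : 0 < β) :
    ∫ u in Set.Ioi (0:ℝ), gammaPDF α β u = 1 := by
  have h : ∀ u : ℝ, gammaPDF α β u
      = (β ^ α / Real.Gamma α) * (u ^ (α - 1) * Real.exp (-(β * u))) := by
    intro u; unfold gammaPDF; rw [neg_mul]; ring
  simp only [h]
  rw [MeasureTheory.integral_const_mul, inner_u hα hβ, Real.rpow_neg hβ.le]
  have hG : Real.Gamma α ≠ 0 := (Real.Gamma_pos_of_pos hα).ne'
  have hb : (β : ℝ) ^ α ≠ 0 := (Real.rpow_pos_of_pos hβ α).ne'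
  field_simp

end Helpers

/-- If `γ ~ Γ(α, β)` with `α, β > 0`, then
`∫₀^∞ (1 - 1/(2(1+u)²)) f_γ(u) du = (1/2)(2 - β + e^β β (α + β - 1) E_α(β))`. -/
theorem expectation_approx_dispersion_gamma (α β : ℝ) (hα : 0 < α) (hβ : 0 < β) :
    (∫ u in Set.Ioi (0 : ℝ), (1 - 1 / (2 * (1 + u) ^ 2)) * gammaPDF α β u) =
      1 / 2 * (2 - β + Real.exp β * β * (α + β - 1) * expInt α β) := by
  have hG : Real.Gamma α ≠ 0 := (Real.Gamma_pos_of_pos hα).ne'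
  have hrw : ∀ u : ℝ, gammaPDF α β u
      = (β ^ α / Real.Gamma α) * (u ^ (α - 1) * Real.exp (-(β * u))) := by
    intro u; unfold gammaPDF; rw [neg_mul]; ring
  have mf : Measurable (fun u : ℝ => gammaPDF α β u) := by
    unfold gammaPDF
    exact ((measurable_const.mul (measurable_id.pow measurable_const)).mul
      ((measurable_id.const_mul (-β)).exp)).div_const _
  have hf_int : MeasureTheory.IntegrableOn (fun u => gammaPDF α β u) (Set.Ioi 0) := by
    have h := (intOn_rpow_exp (by linarith : (-1:ℝ) < α - 1) hβ).const_mul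
      (β ^ α / Real.Gamma α)
    simp only [hrw]
    exact h
  have hq_int : MeasureTheory.IntegrableOn
      (fun u => 1 / (2 * (1 + u) ^ 2) * gammaPDF α β u) (Set.Ioi 0) := by
    apply MeasureTheory.Integrable.mono' hf_int
    · exact ((measurable_const.div (measurable_const.mul
        ((measurable_const.add measurable_id).pow measurable_const))).mul
          mf).aestronglyMeasurable
    · filter_upwards [MeasureTheory.ae_restrict_mem measurableSet_Ioi] with u hu
      have hu0 : (0:ℝ) < u := hu
      have h1u : (0:ℝ) < 1 + u := by linarith
      have hfn : (0:ℝ) ≤ gammaPDF α β u := by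
        rw [hrw u]
        have h1 : (0:ℝ) ≤ u ^ (α - 1) := Real.rpow_nonneg hu0.le _
        have h2 : (0:ℝ) ≤ β ^ α := (Real.rpow_pos_of_pos hβ α).le
        have h3 : (0:ℝ) < Real.Gamma α := Real.Gamma_pos_of_pos hα
        positivity
      have hqle : 1 / (2 * (1 + u) ^ 2) ≤ 1 := by
        rw [div_le_one (by positivity)]; nlinarith
      rw [Real.norm_eq_abs, abs_of_nonneg (by positivity)]
      nlinarith
  have hsplit : (∫ u in Set.Ioi (0 : ℝ), (1 - 1 / (2 * (1 + u) ^ 2)) * gammaPDF α β u)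
      = (∫ u in Set.Ioi (0:ℝ), gammaPDF α β u)
        - ∫ u in Set.Ioi (0:ℝ), 1 / (2 * (1 + u) ^ 2) * gammaPDF α β u := by
    rw [← MeasureTheory.integral_sub hf_int hq_int]
    refine MeasureTheory.setIntegral_congr_fun measurableSet_Ioi (fun u _ => ?_)
    ring
  have hqval : (∫ u in Set.Ioi (0:ℝ), 1 / (2 * (1 + u) ^ 2) * gammaPDF α β u)
      = (β ^ α / (2 * Real.Gamma α))
        * ∫ u in Set.Ioi (0:ℝ), u ^ (α - 1) * Real.exp (-(β * u)) * ((1 + u) ^ 2)⁻¹ := by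
    rw [← MeasureTheory.integral_const_mul]
    refine MeasureTheory.setIntegral_congr_fun measurableSet_Ioi (fun u hu => ?_)
    have hu0 : (0:ℝ) < u := hu
    have h1u : (0:ℝ) < 1 + u := by linarith
    rw [hrw u]
    field_simp
  rw [hsplit, pdf_integral hα hβ, hqval, fubini_step hα hβ, subst_step hα hβ, expInt_eq α β]
  have hftc := ftc_step hα hβ
  have hexp : Real.exp β * Real.exp (-β) = 1 := by rw [← Real.exp_add]; simp
  have hpow : β ^ α * β ^ ((2:ℝ) - α) = β ^ (2:ℕ) := by
    rw [← Real.rpow_add hβ, show α + ((2:ℝ) - α) = ((2:ℕ):ℝ) by push_cast; ring,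
      Real.rpow_natCast]
  set C := ∫ v in Set.Ioi (0:ℝ), v * Real.exp (-(β * v)) * (1 + v) ^ (-α) with hC
  set J := ∫ v in Set.Ioi (0:ℝ), Real.exp (-(β * v)) * (1 + v) ^ (-α) with hJ
  have hmid : β ^ α / (2 * Real.Gamma α) * (Real.Gamma α * (β ^ ((2:ℝ) - α) * C))
      = β ^ (2:ℕ) * C / 2 := by
    field_simp
    linear_combination C * hpow
  rw [hmid]
  linear_combination (-β/2) * hftc + (-(β * (α + β - 1) * J)/2) * hexp
end

section
/- The function f(γ) = log₂(1+γ)/√(1 - 1/(1+γ)²) is monotonically nondecreasing on (0, ∞). -/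
/-- The ratio `f(γ) = log₂(1+γ)/√(1 - 1/(1+γ)²)` of Shannon capacity to the square root
of the channel dispersion is monotonically nondecreasing on `(0, ∞)`. -/
theorem capacity_over_sqrt_dispersion_monotone :
    MonotoneOn (fun γ : ℝ => Real.logb 2 (1 + γ) / Real.sqrt (1 - 1 / (1 + γ) ^ 2))
      (Set.Ioi 0) := by
  have hlog2 : (0:ℝ) < Real.log 2 := Real.log_pos one_lt_two
  have key : ∀ γ : ℝ, γ ∈ Set.Ioi (0:ℝ) →
      HasDerivAt (fun γ : ℝ => Real.log (1 + γ) / Real.sqrt (1 - 1 / (1 + γ) ^ 2))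
        ((1 / (1 + γ) * Real.sqrt (1 - 1 / (1 + γ) ^ 2) -
            Real.log (1 + γ) * ((2 / (1 + γ) ^ 3) / (2 * Real.sqrt (1 - 1 / (1 + γ) ^ 2)))) /
          (Real.sqrt (1 - 1 / (1 + γ) ^ 2)) ^ 2) γ := by
    intro γ hγ
    have hγ' : (0:ℝ) < γ := hγ
    have hu : (0:ℝ) < 1 + γ := by linarith
    have hne : (1 + γ) ≠ 0 := ne_of_gt hu
    have hh : (0:ℝ) < 1 - 1 / (1 + γ) ^ 2 := by
      rw [sub_pos, div_lt_one (by positivity)]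
      nlinarith
    have h1 : HasDerivAt (fun γ : ℝ => 1 + γ) 1 γ := by
      simpa using (hasDerivAt_id γ).const_add (1:ℝ)
    have h2 : HasDerivAt (fun γ : ℝ => Real.log (1 + γ)) (1 / (1 + γ)) γ := by
      exact ((Real.hasDerivAt_log hne).comp γ h1).congr_deriv (by simp)
    have hpow : HasDerivAt (fun γ : ℝ => (1 + γ) ^ 2) (2 * (1 + γ)) γ := by
      exact (h1.pow 2).congr_deriv (by simp)
    have hinv : HasDerivAt (fun γ : ℝ => 1 / (1 + γ) ^ 2)
        (-(2 * (1 + γ)) / ((1 + γ) ^ 2) ^ 2) γ := by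
      simp only [one_div]
      exact hpow.inv (by positivity)
    have hh' : HasDerivAt (fun γ : ℝ => 1 - 1 / (1 + γ) ^ 2) (2 / (1 + γ) ^ 3) γ := by
      have := hinv.const_sub 1
      refine this.congr_deriv ?_
      field_simp
    have hs : HasDerivAt (fun γ : ℝ => Real.sqrt (1 - 1 / (1 + γ) ^ 2))
        ((2 / (1 + γ) ^ 3) / (2 * Real.sqrt (1 - 1 / (1 + γ) ^ 2))) γ := hh'.sqrt (ne_of_gt hh)
    have hsne : Real.sqrt (1 - 1 / (1 + γ) ^ 2) ≠ 0 := by positivity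
    exact h2.div hs hsne
  have hg : StrictMonoOn (fun γ : ℝ => Real.log (1 + γ) / Real.sqrt (1 - 1 / (1 + γ) ^ 2))
      (Set.Ioi 0) := by
    apply strictMonoOn_of_deriv_pos (convex_Ioi 0)
    · intro γ hγ
      exact ((key γ hγ).continuousAt).continuousWithinAt
    · intro γ hγ
      rw [interior_Ioi] at hγ
      rw [(key γ hγ).deriv]
      have hγ' : (0:ℝ) < γ := hγ
      have hu : (0:ℝ) < 1 + γ := by linarith
      have hh : (0:ℝ) < 1 - 1 / (1 + γ) ^ 2 := by
        rw [sub_pos, div_lt_one (by positivity)]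
        nlinarith
      set s := Real.sqrt (1 - 1 / (1 + γ) ^ 2) with hsdef
      have hs0 : 0 < s := Real.sqrt_pos.mpr hh
      have hs2 : s ^ 2 = 1 - 1 / (1 + γ) ^ 2 := Real.sq_sqrt hh.le
      have hL : Real.log (1 + γ) ≤ γ := by
        have := Real.log_le_sub_one_of_pos hu
        linarith
      have h2 : s ^ 2 * (1 + γ) ^ 2 = γ ^ 2 + 2 * γ := by
        rw [hs2]
        field_simp
        ring
      apply div_pos _ (by positivity)
      rw [sub_pos, div_div, mul_div_assoc', div_lt_iff₀ (by positivity : (0:ℝ) < (1 + γ) ^ 3 * (2 * s))]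
      have h3 : 1 / (1 + γ) * s * ((1 + γ) ^ 3 * (2 * s)) = 2 * (s ^ 2 * (1 + γ) ^ 2) := by
        field_simp
      rw [h3, h2]
      nlinarith [hL, hγ', sq_nonneg γ]
  intro a ha b hb hab
  simp only [Real.logb, div_right_comm _ (Real.log 2)]
  exact (div_le_div_iff_of_pos_right hlog2).mpr (hg.monotoneOn ha hb hab)
end
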